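/- (S-lemma, converse direction) Suppose Θ ≻ 0 is positive definite Hermitian. If (ĥ+e)ᴴ G (ĥ+e) ≥ γσ² for every e ∈ ℂ^N with eᴴΘe ≤ 1, then there exists λ ≥ 0 such that the block matrix [[G + λΘ, Gĥ],[ĥᴴG, ĥᴴGĥ − γσ² − λ]] is positive semidefinite. -/

import Mathlib

open Matrix
open scoped ComplexOrder

variable {n : Type*} [Fintype n]

theorem herm_conj (A : Matrix n n ℂ) (hA : A.IsHermitian) (v w : n → ℂ) :
    star w ⬝ᵥ A.mulVec v = starRingEnd ℂ (star v ⬝ᵥ A.mulVec w) := by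
  calc star w ⬝ᵥ A.mulVec v = star (star (A.mulVec v) ⬝ᵥ w) := by rw [star_dotProduct]
    _ = star ((star v ᵥ* Aᴴ) ⬝ᵥ w) := by rw [star_mulVec]
    _ = star (star v ⬝ᵥ Aᴴ *ᵥ w) := by rw [dotProduct_mulVec]
    _ = starRingEnd ℂ (star v ⬝ᵥ A.mulVec w) := by rw [hA.eq]; rfl

theorem herm_self_real (A : Matrix n n ℂ) (hA : A.IsHermitian) (v : n → ℂ) :
    (star v ⬝ᵥ A.mulVec v) = ((star v ⬝ᵥ A.mulVec v).re : ℂ) := by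
  exact (Complex.conj_eq_iff_re.mp (herm_conj A hA v v).symm).symm

theorem kernel23 (p1 q1 r1 p2 q2 r2 : ℝ) :
    ∃ x y z : ℝ, x^2 + y^2 + z^2 = 1 ∧ p1*x+q1*y+r1*z = 0 ∧ p2*x+q2*y+r2*z = 0 := by
  set M : Matrix (Fin 2) (Fin 3) ℝ := !![p1,q1,r1;p2,q2,r2] with hM
  have hni : ¬ Function.Injective M.mulVecLin := by
    intro hinj
    have := LinearMap.finrank_le_finrank_of_injective hinj
    simp [Module.finrank_fin_fun] at this
  rw [← LinearMap.ker_eq_bot] at hni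
  obtain ⟨v, hv, hv0⟩ := Submodule.exists_mem_ne_zero_of_ne_bot hni
  have he1 : p1 * v 0 + q1 * v 1 + r1 * v 2 = 0 := by
    have := congrFun (LinearMap.mem_ker.mp hv) 0
    simpa [hM, Matrix.mulVecLin_apply, Matrix.mulVec, dotProduct, Fin.sum_univ_three] using this
  have he2 : p2 * v 0 + q2 * v 1 + r2 * v 2 = 0 := by
    have := congrFun (LinearMap.mem_ker.mp hv) 1
    simpa [hM, Matrix.mulVecLin_apply, Matrix.mulVec, dotProduct, Fin.sum_univ_three] using this
  have hvpos : 0 < v 0 ^ 2 + v 1 ^ 2 + v 2 ^ 2 := by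
    rcases Classical.em (v 0 = 0 ∧ v 1 = 0 ∧ v 2 = 0) with h0 | h0
    · exfalso; apply hv0; funext i; fin_cases i <;> simp [h0.1, h0.2.1, h0.2.2]
    · have : v 0 ≠ 0 ∨ v 1 ≠ 0 ∨ v 2 ≠ 0 := by tauto
      rcases this with h | h | h <;> positivity
  set s := Real.sqrt (v 0 ^ 2 + v 1 ^ 2 + v 2 ^ 2) with hs
  have hspos : 0 < s := Real.sqrt_pos.mpr hvpos
  have hssq : s ^ 2 = v 0 ^ 2 + v 1 ^ 2 + v 2 ^ 2 := Real.sq_sqrt hvpos.le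
  refine ⟨v 0 / s, v 1 / s, v 2 / s, ?_, ?_, ?_⟩
  · field_simp
    linarith [hssq]
  · field_simp
    linarith [he1]
  · field_simp
    linarith [he2]

theorem expand_quad (A : Matrix n n ℂ) (hA : A.IsHermitian) (v w : n → ℂ) (z₁ z₂ : ℂ) :
    star (z₁ • v + z₂ • w) ⬝ᵥ A.mulVec (z₁ • v + z₂ • w) =
      (starRingEnd ℂ z₁ * z₁) * (star v ⬝ᵥ A.mulVec v)
      + (starRingEnd ℂ z₁ * z₂) * (star v ⬝ᵥ A.mulVec w)
      + (starRingEnd ℂ z₂ * z₁) * starRingEnd ℂ (star v ⬝ᵥ A.mulVec w)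
      + (starRingEnd ℂ z₂ * z₂) * (star w ⬝ᵥ A.mulVec w) := by
  rw [← herm_conj A hA v w]
  simp only [star_add, star_smul, Matrix.mulVec_add, Matrix.mulVec_smul,
    add_dotProduct, dotProduct_add, smul_dotProduct, dotProduct_smul,
    smul_eq_mul, Complex.star_def]
  ring

theorem qf_add (A B : Matrix n n ℂ) (hA : A.IsHermitian) (hB : B.IsHermitian) (v w : n → ℂ) :
    ∃ u : n → ℂ,
      (star u ⬝ᵥ A.mulVec u).re = (star v ⬝ᵥ A.mulVec v).re + (star w ⬝ᵥ A.mulVec w).re ∧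
      (star u ⬝ᵥ B.mulVec u).re = (star v ⬝ᵥ B.mulVec v).re + (star w ⬝ᵥ B.mulVec w).re := by
  set α := (star v ⬝ᵥ A.mulVec v).re with hα
  set α' := (star w ⬝ᵥ A.mulVec w).re with hα'
  set β := (star v ⬝ᵥ B.mulVec v).re with hβ
  set β' := (star w ⬝ᵥ B.mulVec w).re with hβ'
  set a := star v ⬝ᵥ A.mulVec w with ha
  set b := star v ⬝ᵥ B.mulVec w with hb
  obtain ⟨x, y, z, hunit, he1, he2⟩ :=
    kernel23 (α - α') (2 * a.re) (-2 * a.im) (β - β') (2 * b.re) (-2 * b.im)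
  -- helper to compute re of the expansion for any Hermitian M with values
  have key : ∀ (M : Matrix n n ℂ), M.IsHermitian →
      ∀ (z₁ z₂ : ℂ), (starRingEnd ℂ z₁ * z₁) = ((1+x : ℝ) : ℂ) →
      (starRingEnd ℂ z₁ * z₂) = ((y : ℝ) : ℂ) + (z : ℝ) * Complex.I →
      (starRingEnd ℂ z₂ * z₂) = ((1-x : ℝ) : ℂ) →
      (star (z₁ • v + z₂ • w) ⬝ᵥ M.mulVec (z₁ • v + z₂ • w)).re =
        (1+x) * (star v ⬝ᵥ M.mulVec v).re + (1-x) * (star w ⬝ᵥ M.mulVec w).re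
        + 2*y*(star v ⬝ᵥ M.mulVec w).re - 2*z*(star v ⬝ᵥ M.mulVec w).im := by
    intro M hM z₁ z₂ h11 h12 h22
    have h21 : (starRingEnd ℂ z₂ * z₁) = ((y : ℝ) : ℂ) - (z : ℝ) * Complex.I := by
      have : starRingEnd ℂ (starRingEnd ℂ z₂ * z₁) = starRingEnd ℂ z₁ * z₂ := by
        simp [mul_comm]
      rw [← starRingEnd_self_apply (starRingEnd ℂ z₂ * z₁), this, h12]
      simp [Complex.conj_ofReal]
      ring
    rw [expand_quad M hM v w z₁ z₂, h11, h12, h21, h22]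
    rw [herm_self_real M hM v, herm_self_real M hM w]
    simp [Complex.add_re, Complex.mul_re, Complex.sub_re, Complex.add_im, Complex.sub_im,
      Complex.mul_im, Complex.conj_re, Complex.conj_im, Complex.ofReal_re, Complex.ofReal_im,
      Complex.I_re, Complex.I_im]
    ring
  by_cases hx : (1 : ℝ) + x = 0
  · -- x = -1, y = z = 0, and α = α', β = β'
    have hx' : x = -1 := by linarith
    have hy : y = 0 := by nlinarith [sq_nonneg y, sq_nonneg z]
    have hz : z = 0 := by nlinarith [sq_nonneg y, sq_nonneg z]
    have hAA : α = α' := by rw [hx', hy, hz] at he1; linarith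
    have hBB : β = β' := by rw [hx', hy, hz] at he2; linarith
    have hs2 : (Real.sqrt 2 : ℝ) * Real.sqrt 2 = 2 := Real.mul_self_sqrt (by norm_num)
    have scale : ∀ (M : Matrix n n ℂ),
        (star ((Real.sqrt 2 : ℂ) • w) ⬝ᵥ M.mulVec ((Real.sqrt 2 : ℂ) • w)).re
          = 2 * (star w ⬝ᵥ M.mulVec w).re := by
      intro M
      have : star ((Real.sqrt 2 : ℂ) • w) ⬝ᵥ M.mulVec ((Real.sqrt 2 : ℂ) • w)
          = ((Real.sqrt 2 : ℝ) * Real.sqrt 2 : ℝ) * (star w ⬝ᵥ M.mulVec w) := by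
        simp only [star_smul, Matrix.mulVec_smul, smul_dotProduct, dotProduct_smul,
          smul_eq_mul, Complex.star_def]
        push_cast
        simp [Complex.conj_ofReal]
        ring
      rw [this, hs2]
      simp [Complex.ofReal_mul]
    refine ⟨(Real.sqrt 2 : ℂ) • w, ?_, ?_⟩
    · rw [scale A]; linarith
    · rw [scale B]; linarith
  · have hxgt : 0 < 1 + x := by
      rcases lt_or_gt_of_ne hx with hlt | hgt
      · nlinarith [sq_nonneg y, sq_nonneg z]
      · linarith
    set t := Real.sqrt (1 + x) with ht
    have htpos : 0 < t := Real.sqrt_pos.mpr hxgt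
    have hts : t * t = 1 + x := Real.mul_self_sqrt hxgt.le
    have htne : (t : ℂ) ≠ 0 := by
      simp [Complex.ofReal_ne_zero]; exact ne_of_gt htpos
    set z₁ : ℂ := (t : ℂ) with hz₁
    set z₂ : ℂ := (((y : ℝ) : ℂ) + (z : ℝ) * Complex.I) / (t : ℂ) with hz₂
    have h11 : starRingEnd ℂ z₁ * z₁ = ((1+x : ℝ) : ℂ) := by
      rw [hz₁, Complex.conj_ofReal, ← Complex.ofReal_mul, hts]
    have h12 : starRingEnd ℂ z₁ * z₂ = ((y : ℝ) : ℂ) + (z : ℝ) * Complex.I := by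
      rw [hz₁, hz₂, Complex.conj_ofReal]
      field_simp
    have h22 : starRingEnd ℂ z₂ * z₂ = ((1-x : ℝ) : ℂ) := by
      rw [hz₂]
      rw [map_div₀, Complex.conj_ofReal]
      rw [div_mul_div_comm]
      have hnum : starRingEnd ℂ (((y : ℝ) : ℂ) + (z : ℝ) * Complex.I)
          * (((y : ℝ) : ℂ) + (z : ℝ) * Complex.I) = ((y^2 + z^2 : ℝ) : ℂ) := by
        apply Complex.ext <;>
          simp [Complex.conj_ofReal, Complex.add_re, Complex.add_im, Complex.mul_re,
            Complex.mul_im, Complex.ofReal_pow, pow_two] <;> ring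
      rw [hnum, ← Complex.ofReal_mul, hts]
      have h1x : ((1 + x : ℝ) : ℂ) ≠ 0 := Complex.ofReal_ne_zero.mpr hx
      rw [div_eq_iff h1x, ← Complex.ofReal_mul]
      norm_cast
      nlinarith
    refine ⟨z₁ • v + z₂ • w, ?_, ?_⟩
    · rw [key A hA z₁ z₂ h11 h12 h22]; linarith
    · rw [key B hB z₁ z₂ h11 h12 h22]; linarith

theorem qf_smul (A : Matrix n n ℂ) (c : ℝ) (hc : 0 ≤ c) (v : n → ℂ) :
    (star ((Real.sqrt c : ℂ) • v) ⬝ᵥ A.mulVec ((Real.sqrt c : ℂ) • v)).re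
      = c * (star v ⬝ᵥ A.mulVec v).re := by
  have : star ((Real.sqrt c : ℂ) • v) ⬝ᵥ A.mulVec ((Real.sqrt c : ℂ) • v)
      = ((Real.sqrt c * Real.sqrt c : ℝ) : ℂ) * (star v ⬝ᵥ A.mulVec v) := by
    simp only [star_smul, Matrix.mulVec_smul, smul_dotProduct, dotProduct_smul,
      smul_eq_mul, Complex.star_def, Complex.conj_ofReal]
    push_cast
    ring
  rw [this, Real.mul_self_sqrt hc]
  simp [Complex.mul_re]

theorem homog_slemma (A B : Matrix n n ℂ) (hA : A.IsHermitian) (hB : B.IsHermitian)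
    (hyp : ∀ v : n → ℂ, (star v ⬝ᵥ B.mulVec v).re ≤ 0 → 0 ≤ (star v ⬝ᵥ A.mulVec v).re)
    (v₀ : n → ℂ) (hslater : (star v₀ ⬝ᵥ B.mulVec v₀).re < 0) :
    ∃ lam : ℝ, 0 ≤ lam ∧ (A + (lam : ℂ) • B).PosSemidef := by
  classical
  set F : (n → ℂ) → ℝ × ℝ :=
    fun v => ((star v ⬝ᵥ A.mulVec v).re, (star v ⬝ᵥ B.mulVec v).re) with hF
  set W : Set (ℝ × ℝ) := Set.range F with hW
  set C : Set (ℝ × ℝ) := {p | p.1 < 0 ∧ p.2 < 0} with hC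
  have hCopen : IsOpen C := by
    have h1 : IsOpen {p : ℝ × ℝ | p.1 < 0} := isOpen_lt continuous_fst continuous_const
    have h2 : IsOpen {p : ℝ × ℝ | p.2 < 0} := isOpen_lt continuous_snd continuous_const
    exact (h1.inter h2)
  have hCconv : Convex ℝ C := by
    have h1 : Convex ℝ {p : ℝ × ℝ | p.1 < 0} :=
      convex_halfSpace_lt (IsLinearMap.mk (fun a b => rfl) (fun c a => rfl)) 0
    have h2 : Convex ℝ {p : ℝ × ℝ | p.2 < 0} :=
      convex_halfSpace_lt (IsLinearMap.mk (fun a b => rfl) (fun c a => rfl)) 0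
    exact h1.inter h2
  have hWsmul : ∀ c : ℝ, 0 ≤ c → ∀ p ∈ W, c • p ∈ W := by
    rintro c hc p ⟨v, rfl⟩
    exact ⟨(Real.sqrt c : ℂ) • v, by
      simp only [hF, Prod.smul_mk, smul_eq_mul, qf_smul A c hc v, qf_smul B c hc v]⟩
  have hWadd : ∀ p ∈ W, ∀ q ∈ W, p + q ∈ W := by
    rintro p ⟨v, rfl⟩ q ⟨w, rfl⟩
    obtain ⟨u, h1, h2⟩ := qf_add A B hA hB v w
    exact ⟨u, by simp only [hF, Prod.mk_add_mk, h1, h2]⟩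
  have hWconv : Convex ℝ W := by
    intro p hp q hq a b ha hb hab
    exact hWadd _ (hWsmul a ha p hp) _ (hWsmul b hb q hq)
  have hdisj : Disjoint C W := by
    rw [Set.disjoint_left]
    rintro p ⟨hp1, hp2⟩ ⟨v, rfl⟩
    exact absurd (hyp v (le_of_lt hp2)) (not_le.mpr hp1)
  obtain ⟨f, u, hfC, hfW⟩ := geometric_hahn_banach_open hCconv hCopen hWconv hdisj
  have h0W : (0 : ℝ × ℝ) ∈ W := ⟨0, by simp [hF]⟩
  have hu0 : u ≤ 0 := by simpa using hfW 0 h0W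
  have hu0' : 0 ≤ u := by
    by_contra hneg
    push_neg at hneg
    set c := f (1, 1) with hc'
    have hεc : ∀ ε : ℝ, 0 < ε → -(ε * c) < u := by
      intro ε hε
      have hmem : ((-ε, -ε) : ℝ × ℝ) ∈ C := ⟨by simpa using hε, by simpa using hε⟩
      have hlt := hfC _ hmem
      have heq : f (-ε, -ε) = -(ε * c) := by
        have h1 : ((-ε, -ε) : ℝ × ℝ) = (-ε) • ((1,1) : ℝ × ℝ) := by
          rw [Prod.smul_mk]; norm_num
        rw [h1, f.map_smul, smul_eq_mul, ← hc']
        ring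
      linarith [heq ▸ hlt]
    rcases le_or_gt c 0 with hcle | hcpos
    · have := hεc 1 one_pos
      nlinarith
    · have h1 := hεc (-u / (2*c)) (div_pos (by linarith) (by linarith))
      have h2 : -(-u / (2*c) * c) = u/2 := by field_simp
      nlinarith
  have hu : u = 0 := le_antisymm hu0 hu0'
  subst hu
  set α := f (1, 0) with hαdef
  set β := f (0, 1) with hβdef
  have hflin : ∀ s t : ℝ, f (s, t) = s * α + t * β := by
    intro s t
    have : ((s, t) : ℝ × ℝ) = s • ((1,0) : ℝ × ℝ) + t • ((0,1) : ℝ × ℝ) := by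
      simp [Prod.smul_mk]
    rw [this, f.map_add, f.map_smul, f.map_smul, smul_eq_mul, smul_eq_mul, ← hαdef, ← hβdef]
  have hβnn : 0 ≤ β := by
    by_contra hneg
    push_neg at hneg
    have ht : (0:ℝ) < (|α| + 1) / (-β) :=
      div_pos (by positivity) (by linarith)
    have hmem : ((-1, -((|α| + 1) / (-β))) : ℝ × ℝ) ∈ C := ⟨by norm_num, by simpa using ht⟩
    have hlt := hfC _ hmem
    rw [hflin] at hlt
    have hTβ : ((|α| + 1) / (-β)) * (-β) = |α| + 1 :=
      div_mul_cancel₀ _ (ne_of_gt (by linarith))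
    have hβval : -((|α| + 1) / (-β)) * β = |α| + 1 := by rw [neg_mul, ← mul_neg]; exact hTβ
    rw [hβval] at hlt
    linarith [le_abs_self α, neg_abs_le α]
  have hαnn : 0 ≤ α := by
    by_contra hneg
    push_neg at hneg
    have ht : (0:ℝ) < (|β| + 1) / (-α) :=
      div_pos (by positivity) (by linarith)
    have hmem : ((-((|β| + 1) / (-α)), -1) : ℝ × ℝ) ∈ C := ⟨by simpa using ht, by norm_num⟩
    have hlt := hfC _ hmem
    rw [hflin] at hlt
    have hTα : ((|β| + 1) / (-α)) * (-α) = |β| + 1 :=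
      div_mul_cancel₀ _ (ne_of_gt (by linarith))
    have hαval : -((|β| + 1) / (-α)) * α = |β| + 1 := by rw [neg_mul, ← mul_neg]; exact hTα
    rw [hαval] at hlt
    linarith [le_abs_self β, neg_abs_le β]
  have hW0 : ∀ v : n → ℂ, 0 ≤ α * (star v ⬝ᵥ A.mulVec v).re + β * (star v ⬝ᵥ B.mulVec v).re := by
    intro v
    have := hfW _ ⟨v, rfl⟩
    rw [hF] at this
    simp only at this
    rw [hflin] at this
    linarith
  have hαpos : 0 < α := by
    rcases lt_or_eq_of_le hαnn with h | h
    · exact h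
    · exfalso
      have hβpos : 0 < β := by
        have hsum : -1 * α + -1 * β < 0 := by
          have := hfC ((-1,-1) : ℝ × ℝ) ⟨by norm_num, by norm_num⟩
          rw [hflin] at this; linarith
        rcases lt_or_eq_of_le hβnn with hb | hb
        · exact hb
        · exfalso; rw [← h, ← hb] at hsum; linarith
      have h0 := hW0 v₀
      have hA0 : 0 ≤ (star v₀ ⬝ᵥ A.mulVec v₀).re := hyp v₀ hslater.le
      rw [← h] at h0
      nlinarith
  have hMh : (A + ((β/α : ℝ) : ℂ) • B).IsHermitian := by
    apply hA.add
    show (((β/α : ℝ) : ℂ) • B)ᴴ = _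
    rw [conjTranspose_smul, hB.eq]
    congr 1
    simp [Complex.star_def, Complex.conj_ofReal]
  refine ⟨β / α, div_nonneg hβnn hαpos.le, .of_dotProduct_mulVec_nonneg hMh ?_⟩
  intro x
  set M : Matrix n n ℂ := A + ((β/α : ℝ) : ℂ) • B with hM
  have hsplit : star x ⬝ᵥ M.mulVec x
      = star x ⬝ᵥ A.mulVec x + ((β/α : ℝ) : ℂ) * (star x ⬝ᵥ B.mulVec x) := by
    rw [hM, Matrix.add_mulVec, dotProduct_add, Matrix.smul_mulVec, dotProduct_smul,
      smul_eq_mul]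
  have hre : 0 ≤ (star x ⬝ᵥ M.mulVec x).re := by
    rw [hsplit]
    have heq : (star x ⬝ᵥ A.mulVec x + ((β/α : ℝ) : ℂ) * (star x ⬝ᵥ B.mulVec x)).re
        = (star x ⬝ᵥ A.mulVec x).re + (β/α) * (star x ⬝ᵥ B.mulVec x).re := by
      simp [Complex.add_re, Complex.mul_re]
    rw [heq]
    have heq2 : (star x ⬝ᵥ A.mulVec x).re + (β/α) * (star x ⬝ᵥ B.mulVec x).re
        = (α * (star x ⬝ᵥ A.mulVec x).re + β * (star x ⬝ᵥ B.mulVec x).re)/α := by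
      field_simp
    rw [heq2]
    exact div_nonneg (hW0 x) hαpos.le
  rw [herm_self_real M hMh x]
  exact Complex.zero_le_real.mpr hre

theorem stmt_8 (N : ℕ) (G Θ : Matrix (Fin N) (Fin N) ℂ) (h : Fin N → ℂ)
    (γσsq : ℝ)
    (hG : G.IsHermitian) (hΘ : Θ.PosDef)
    (hrobust : ∀ e : Fin N → ℂ, (star e ⬝ᵥ Θ.mulVec e).re ≤ 1 →
      γσsq ≤ (star (h + e) ⬝ᵥ G.mulVec (h + e)).re) :
    ∃ lam : ℝ, 0 ≤ lam ∧
      (Matrix.fromBlocks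
        (G + (lam : ℂ) • Θ)
        (Matrix.of fun i (_ : Fin 1) => G.mulVec h i)
        (Matrix.of fun (_ : Fin 1) j => star (G.mulVec h j))
        (Matrix.of fun (_ : Fin 1) (_ : Fin 1) =>
          star h ⬝ᵥ G.mulVec h - (γσsq : ℝ) - (lam : ℝ))).PosSemidef := by
  classical
  set Q1 : Matrix (Fin N) (Fin 1) ℂ := Matrix.of fun i (_ : Fin 1) => G.mulVec h i with hQ1
  set R1 : Matrix (Fin 1) (Fin N) ℂ := Matrix.of fun (_ : Fin 1) j => star (G.mulVec h j) with hR1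
  set S1 : Matrix (Fin 1) (Fin 1) ℂ :=
    Matrix.of fun (_ : Fin 1) (_ : Fin 1) => star h ⬝ᵥ G.mulVec h - (γσsq : ℝ) with hS1
  set A0 : Matrix (Fin N ⊕ Fin 1) (Fin N ⊕ Fin 1) ℂ := Matrix.fromBlocks G Q1 R1 S1 with hA0
  set B0 : Matrix (Fin N ⊕ Fin 1) (Fin N ⊕ Fin 1) ℂ :=
    Matrix.fromBlocks Θ 0 0 (Matrix.of fun _ _ => (-1 : ℂ)) with hB0
  have hshh : starRingEnd ℂ (star h ⬝ᵥ G.mulVec h) = star h ⬝ᵥ G.mulVec h :=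
    (herm_conj G hG h h).symm
  -- Hermitian-ness
  have hA0h : A0.IsHermitian := by
    rw [hA0, Matrix.IsHermitian, fromBlocks_conjTranspose]
    have e2 : R1ᴴ = Q1 := by ext i j; simp [hR1, hQ1, Matrix.conjTranspose_apply]
    have e3 : Q1ᴴ = R1 := by ext i j; simp [hQ1, hR1, Matrix.conjTranspose_apply]
    have e4 : S1ᴴ = S1 := by
      ext i j
      simp only [hS1, Matrix.conjTranspose_apply, Matrix.of_apply, star_sub]
      rw [Complex.star_def, hshh]
      simp [Complex.conj_ofReal]
    rw [hG.eq, e2, e3, e4]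
  have hB0h : B0.IsHermitian := by
    rw [hB0, Matrix.IsHermitian, fromBlocks_conjTranspose]
    have e4 : (Matrix.of fun (_ : Fin 1) (_ : Fin 1) => (-1:ℂ))ᴴ
        = Matrix.of fun _ _ => (-1:ℂ) := by
      ext i j; simp [Matrix.conjTranspose_apply]
    rw [hΘ.1.eq, e4]
    simp
  -- quadratic form computations
  have qA0 : ∀ (e : Fin N → ℂ) (t : Fin 1 → ℂ),
      star (Sum.elim e t) ⬝ᵥ A0.mulVec (Sum.elim e t)
      = star e ⬝ᵥ G.mulVec e + t 0 * (star e ⬝ᵥ G.mulVec h)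
        + starRingEnd ℂ (t 0) * starRingEnd ℂ (star e ⬝ᵥ G.mulVec h)
        + starRingEnd ℂ (t 0) * t 0 * (star h ⬝ᵥ G.mulVec h - (γσsq : ℝ)) := by
    intro e t
    rw [hA0, Function.star_sumElim, fromBlocks_mulVec, Sum.elim_comp_inl, Sum.elim_comp_inr,
      sumElim_dotProduct_sumElim]
    have h1 : Q1.mulVec t = t 0 • G.mulVec h := by
      funext i; simp [hQ1, Matrix.mulVec, dotProduct, Fin.sum_univ_one, mul_comm]
    have h2 : R1.mulVec e = fun _ => star (G.mulVec h) ⬝ᵥ e := by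
      funext j; simp [hR1, Matrix.mulVec, dotProduct]
    have h3 : S1.mulVec t = fun _ => (star h ⬝ᵥ G.mulVec h - (γσsq : ℝ)) * t 0 := by
      funext j; simp [hS1, Matrix.mulVec, dotProduct, Fin.sum_univ_one]
    rw [h1, h2, h3, dotProduct_add, dotProduct_add, dotProduct_smul]
    have h4 : star (G.mulVec h) ⬝ᵥ e = starRingEnd ℂ (star e ⬝ᵥ G.mulVec h) := by
      rw [star_dotProduct]; rfl
    have h5 : ∀ g : Fin 1 → ℂ, star t ⬝ᵥ g = starRingEnd ℂ (t 0) * g 0 := by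
      intro g; simp [dotProduct, Fin.sum_univ_one]
    rw [h5, h5, h4]
    simp only [smul_eq_mul, Pi.add_apply]
    ring
  have qB0 : ∀ (e : Fin N → ℂ) (t : Fin 1 → ℂ),
      star (Sum.elim e t) ⬝ᵥ B0.mulVec (Sum.elim e t)
      = star e ⬝ᵥ Θ.mulVec e - starRingEnd ℂ (t 0) * t 0 := by
    intro e t
    rw [hB0, Function.star_sumElim, fromBlocks_mulVec, Sum.elim_comp_inl, Sum.elim_comp_inr,
      sumElim_dotProduct_sumElim]
    have h3 : (Matrix.of fun (_ : Fin 1) (_ : Fin 1) => (-1:ℂ)).mulVec t = fun _ => - t 0 := by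
      funext j; simp [Matrix.mulVec, dotProduct, Fin.sum_univ_one]
    rw [h3]
    have h5 : ∀ g : Fin 1 → ℂ, star t ⬝ᵥ g = starRingEnd ℂ (t 0) * g 0 := by
      intro g; simp [dotProduct, Fin.sum_univ_one]
    simp only [Matrix.zero_mulVec, add_zero, zero_add, h5]
    ring
  -- the homogenized robustness hypothesis
  have hyp : ∀ v : (Fin N ⊕ Fin 1) → ℂ,
      (star v ⬝ᵥ B0.mulVec v).re ≤ 0 → 0 ≤ (star v ⬝ᵥ A0.mulVec v).re := by
    intro v hv
    set e : Fin N → ℂ := v ∘ Sum.inl with he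
    set t : Fin 1 → ℂ := v ∘ Sum.inr with ht
    have hv' : Sum.elim e t = v := Sum.elim_comp_inl_inr v
    rw [← hv'] at hv ⊢
    rw [qB0] at hv
    rw [qA0]
    by_cases ht0 : t 0 = 0
    · -- t = 0 forces e = 0
      have he0 : e = 0 := by
        by_contra hne
        have hpos := hΘ.dotProduct_mulVec_pos hne
        have : 0 < (star e ⬝ᵥ Θ.mulVec e).re := by
          rw [Complex.lt_def] at hpos
          exact hpos.1
        rw [Complex.sub_re, ht0] at hv
        simp at hv
        linarith
      rw [he0, ht0]
      simp
    · set e' : Fin N → ℂ := (t 0)⁻¹ • e with he'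
      have hΘe' : (star e' ⬝ᵥ Θ.mulVec e').re ≤ 1 := by
        have h6 : starRingEnd ℂ ((t 0)⁻¹) * ((t 0)⁻¹) = (((Complex.normSq (t 0))⁻¹ : ℝ) : ℂ) := by
          rw [← Complex.normSq_eq_conj_mul_self, Complex.normSq_inv]
        have hexp : star e' ⬝ᵥ Θ.mulVec e'
            = (((Complex.normSq (t 0))⁻¹ : ℝ) : ℂ) * (star e ⬝ᵥ Θ.mulVec e) := by
          rw [he']
          have hstep : star ((t 0)⁻¹ • e) ⬝ᵥ Θ.mulVec ((t 0)⁻¹ • e)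
              = (starRingEnd ℂ ((t 0)⁻¹) * ((t 0)⁻¹)) * (star e ⬝ᵥ Θ.mulVec e) := by
            simp only [star_smul, Matrix.mulVec_smul, smul_dotProduct, dotProduct_smul,
              smul_eq_mul, Complex.star_def]
            ring
          rw [hstep, h6]
        rw [hexp]
        have hns : 0 < Complex.normSq (t 0) := Complex.normSq_pos.mpr ht0
        have hre : ((((Complex.normSq (t 0))⁻¹ : ℝ) : ℂ) * (star e ⬝ᵥ Θ.mulVec e)).re
            = (Complex.normSq (t 0))⁻¹ * (star e ⬝ᵥ Θ.mulVec e).re := by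
          simp [Complex.mul_re]
        rw [hre]
        have hb : (star e ⬝ᵥ Θ.mulVec e).re ≤ Complex.normSq (t 0) := by
          rw [Complex.sub_re] at hv
          have : (starRingEnd ℂ (t 0) * t 0).re = Complex.normSq (t 0) := by
            rw [← Complex.normSq_eq_conj_mul_self]; simp
          rw [this] at hv
          linarith
        rw [inv_mul_le_iff₀ hns]
        calc (star e ⬝ᵥ Θ.mulVec e).re ≤ Complex.normSq (t 0) := hb
          _ ≤ (Complex.normSq (t 0)) * 1 * 1 := by ring_nf; exact le_refl _
          _ ≤ _ := by nlinarith
      have hrob := hrobust e' hΘe'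
      -- key algebraic identity
      have hkey : star e ⬝ᵥ G.mulVec e + t 0 * (star e ⬝ᵥ G.mulVec h)
          + starRingEnd ℂ (t 0) * starRingEnd ℂ (star e ⬝ᵥ G.mulVec h)
          + starRingEnd ℂ (t 0) * t 0 * (star h ⬝ᵥ G.mulVec h - (γσsq : ℝ))
          = (starRingEnd ℂ (t 0) * t 0)
            * (star (h + e') ⬝ᵥ G.mulVec (h + e') - (γσsq : ℝ)) := by
        have hexp : star (h + e') ⬝ᵥ G.mulVec (h + e')
            = star h ⬝ᵥ G.mulVec h + (starRingEnd ℂ (t 0))⁻¹ * (star e ⬝ᵥ G.mulVec h)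
              + (t 0)⁻¹ * starRingEnd ℂ (star e ⬝ᵥ G.mulVec h)
              + (starRingEnd ℂ (t 0))⁻¹ * (t 0)⁻¹ * (star e ⬝ᵥ G.mulVec e) := by
          rw [he']
          have hhe : star h ⬝ᵥ G.mulVec e = starRingEnd ℂ (star e ⬝ᵥ G.mulVec h) :=
            herm_conj G hG e h
          simp only [star_add, star_smul, Matrix.mulVec_add, Matrix.mulVec_smul,
            add_dotProduct, dotProduct_add, smul_dotProduct, dotProduct_smul,
            smul_eq_mul, Complex.star_def, map_inv₀]
          rw [hhe]
          ring
        rw [hexp]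
        have ht0c : starRingEnd ℂ (t 0) ≠ 0 := by
          simp [ht0]
        field_simp
        ring
      rw [hkey]
      have hfactor : star (h + e') ⬝ᵥ G.mulVec (h + e') - ((γσsq : ℝ) : ℂ)
          = (((star (h + e') ⬝ᵥ G.mulVec (h + e')).re - γσsq : ℝ) : ℂ) := by
        rw [herm_self_real G hG (h + e')]
        rw [Complex.ofReal_re]
        push_cast
        ring
      have hns : (starRingEnd ℂ (t 0) * t 0) = ((Complex.normSq (t 0) : ℝ) : ℂ) := by
        rw [← Complex.normSq_eq_conj_mul_self]
      rw [hfactor, hns, ← Complex.ofReal_mul]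
      rw [Complex.ofReal_re]
      have := Complex.normSq_nonneg (t 0)
      nlinarith
  -- Slater point
  have hslater : (star (Sum.elim (0 : Fin N → ℂ) (fun _ => (1:ℂ)))
      ⬝ᵥ B0.mulVec (Sum.elim 0 (fun _ => 1))).re < 0 := by
    rw [qB0]
    simp
  obtain ⟨lam, hlam, hpsd⟩ := homog_slemma A0 B0 hA0h hB0h hyp _ hslater
  refine ⟨lam, hlam, ?_⟩
  have hfinal : Matrix.fromBlocks
        (G + (lam : ℂ) • Θ)
        (Matrix.of fun i (_ : Fin 1) => G.mulVec h i)
        (Matrix.of fun (_ : Fin 1) j => star (G.mulVec h j))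
        (Matrix.of fun (_ : Fin 1) (_ : Fin 1) =>
          star h ⬝ᵥ G.mulVec h - (γσsq : ℝ) - (lam : ℝ))
      = A0 + ((lam : ℝ) : ℂ) • B0 := by
    rw [hA0, hB0, Matrix.fromBlocks_smul, Matrix.fromBlocks_add]
    have b2 : Matrix.of (fun i (_ : Fin 1) => G.mulVec h i)
        = Q1 + ((lam : ℝ) : ℂ) • (0 : Matrix (Fin N) (Fin 1) ℂ) := by simp [hQ1]
    have b3 : Matrix.of (fun (_ : Fin 1) j => star (G.mulVec h j))
        = R1 + ((lam : ℝ) : ℂ) • (0 : Matrix (Fin 1) (Fin N) ℂ) := by simp [hR1]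
    have b4 : (Matrix.of fun (_ : Fin 1) (_ : Fin 1) =>
          star h ⬝ᵥ G.mulVec h - (γσsq : ℝ) - (lam : ℝ))
        = S1 + ((lam : ℝ) : ℂ) • (Matrix.of fun _ _ => (-1 : ℂ)) := by
      ext i j
      simp [hS1]
      ring
    rw [← b2, ← b3, ← b4]
  rw [hfinal]
  exact hpsd
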